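/- Let (θ, x) be a discrete Bayesian large-sample estimation problem with a consistent posterior, and let (L_n) be a discerning loss function sequence. Then every Bayes estimator associated with (L_n) — i.e., every estimator satisfying θ̂_n(x_{1:n}) ∈ argmin_{θ'} E[L_n(θ, θ') | x_{1:n}] — is strongly consistent (converges almost surely to θ under P_θ for every θ). -/

import Mathlib

open MeasureTheory ProbabilityTheory Filter Set Topology
open scoped ENNReal

/-- The cylinder event determined by the first `n` observations of `ω`. -/
def cylinder {Θ : Type*} {X : ℕ → Type*} (n : ℕ) (ω : Θ × (∀ i, X i)) :
    Set (Θ × (∀ i, X i)) :=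
  {ω' | ∀ i < n, ω'.2 i = ω.2 i}

/-- On a discrete Bayesian large-sample estimation problem with a consistent posterior,
every Bayes estimator associated with a discerning loss function sequence is strongly
consistent. -/
theorem bayes_estimator_strongly_consistent_of_discerning
    {Θ : Type*} [Countable Θ] [MeasurableSpace Θ] [DiscreteMeasurableSpace Θ]
    [TopologicalSpace Θ] [T1Space Θ] [FirstCountableTopology Θ]
    {X : ℕ → Type*} [∀ n, Countable (X n)] [∀ n, MeasurableSpace (X n)]
    [∀ n, DiscreteMeasurableSpace (X n)]
    (μ : Measure (Θ × (∀ i, X i))) [IsProbabilityMeasure μ]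
    (hprior : ∀ θ : Θ, 0 < μ (Prod.fst ⁻¹' {θ}))
    -- consistent posterior
    (hpost : ∀ θ : Θ,
        ∀ᵐ ω ∂(μ[|Prod.fst ⁻¹' {θ}]),
          Tendsto (fun n : ℕ => (μ[|cylinder n ω]) (Prod.fst ⁻¹' {θ})) atTop (𝓝 1))
    -- the loss function sequence
    (L : ℕ → Θ → Θ → ℝ≥0∞)
    (hLfin : ∀ n θ θ', L n θ θ' ≠ ⊤)
    (hL0 : ∀ n θ, L n θ θ = 0)
    -- discerning
    (hdisc : ∀ θ : Θ, ∀ U ∈ 𝓝 θ,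
        0 < liminf (fun n : ℕ => ⨅ θ' ∈ Uᶜ, L n θ θ' / ⨆ θ'', L n θ'' θ) atTop)
    -- a Bayes estimator associated with `L`
    (est : (n : ℕ) → (∀ i, X i) → Θ)
    (hdep : ∀ n (x y : ∀ i, X i), (∀ i < n, x i = y i) → est n x = est n y)
    (hbayes : ∀ (n : ℕ) (ω : Θ × (∀ i, X i)) (θ₀ : Θ),
        (∑' θ' : Θ, (μ[|cylinder n ω]) (Prod.fst ⁻¹' {θ'}) * L n θ' (est n ω.2)) ≤
          ∑' θ' : Θ, (μ[|cylinder n ω]) (Prod.fst ⁻¹' {θ'}) * L n θ' θ₀) :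
    ∀ θ : Θ, ∀ᵐ ω ∂(μ[|Prod.fst ⁻¹' {θ}]),
        Tendsto (fun n : ℕ => est n ω.2) atTop (𝓝 θ) := by
  classical
  intro θ
  filter_upwards [hpost θ] with ω hω
  rw [Filter.tendsto_def]
  intro U hU
  set π : ℕ → Θ → ℝ≥0∞ := fun n θ' => (μ[|cylinder n ω]) (Prod.fst ⁻¹' {θ'}) with hπdef
  -- total posterior mass is at most 1
  have hmeas : ∀ θ' : Θ, MeasurableSet (Prod.fst ⁻¹' {θ'} : Set (Θ × ∀ i, X i)) :=
    fun θ' => (measurableSet_singleton θ').preimage measurable_fst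
  have hmeascyl : ∀ n : ℕ, MeasurableSet (cylinder n ω) := by
    intro n
    have hcyleq : _root_.cylinder n ω = ⋂ i ∈ Set.Iio n,
        (fun ω' : Θ × ∀ i, X i => ω'.2 i) ⁻¹' {ω.2 i} := by
      ext ω'
      change (∀ i < n, ω'.2 i = ω.2 i) ↔ _
      simp
    rw [hcyleq]
    exact MeasurableSet.biInter (Set.to_countable _) fun i _ =>
      (measurableSet_singleton _).preimage ((measurable_pi_apply i).comp measurable_snd)
  have hsum1 : ∀ n : ℕ, (∑' θ' : Θ, π n θ') ≤ 1 := by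
    intro n
    have hdisj : Pairwise (Function.onFun Disjoint
        fun θ' : Θ => (Prod.fst ⁻¹' {θ'} : Set (Θ × ∀ i, X i))) := by
      intro a b hab
      simp only [Function.onFun, Set.disjoint_left]
      rintro x hxa hxb
      exact hab (by simp_all)
    have hU' : (⋃ θ' : Θ, (Prod.fst ⁻¹' {θ'} : Set (Θ × ∀ i, X i))) = Set.univ := by
      ext x; simp
    have := (measure_iUnion (μ := μ[|cylinder n ω]) hdisj hmeas).symm
    rw [hU'] at this
    rw [hπdef]
    rw [this, cond_apply (hmeascyl n), Set.inter_univ]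
    exact ENNReal.inv_mul_le_one _
  obtain ⟨c, hc0, hclt⟩ := exists_between (hdisc θ U hU)
  set δ : ℝ≥0∞ := 2⁻¹ * min c 1 with hδdef
  have hδ0 : δ ≠ 0 := by
    have h01 : (0 : ℝ≥0∞) < min c 1 := lt_min hc0 one_pos
    simp [hδdef, h01.ne']
  have hδhalf : δ ≤ 2⁻¹ := by
    calc δ ≤ 2⁻¹ * 1 := mul_le_mul_right (min_le_right _ _) _
    _ = 2⁻¹ := mul_one _
  have hδc : δ ≤ 2⁻¹ * c := mul_le_mul_right (min_le_left _ _) _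
  have hδ1 : δ ≤ 1 := hδhalf.trans (by norm_num)
  have E1 : ∀ᶠ n in atTop, c < ⨅ θ' ∈ Uᶜ, L n θ θ' / ⨆ θ'', L n θ'' θ :=
    Filter.eventually_lt_of_lt_liminf hclt
  have E2 : ∀ᶠ n in atTop, 1 - δ < π n θ :=
    hω.eventually (eventually_gt_nhds (ENNReal.sub_lt_self ENNReal.one_ne_top one_ne_zero hδ0))
  filter_upwards [E1, E2] with n h1 h2
  by_contra ha
  set a := est n ω.2 with hadef
  have haU : a ∈ Uᶜ := ha
  set K := ⨆ θ'', L n θ'' θ with hK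
  have hcd : c < L n θ a / K := lt_of_lt_of_le h1 (iInf₂_le a haU)
  -- basic facts about π n θ
  have hπle1 : π n θ ≤ 1 := le_trans (ENNReal.le_tsum θ) (hsum1 n)
  have hπtop : π n θ ≠ ⊤ := (lt_of_le_of_lt hπle1 (by norm_num)).ne
  have hπhalf : 2⁻¹ ≤ π n θ := by
    refine le_trans ?_ h2.le
    calc (2⁻¹ : ℝ≥0∞) = 1 - 2⁻¹ := ENNReal.one_sub_inv_two.symm
    _ ≤ 1 - δ := tsub_le_tsub_left hδhalf 1
  have hπ0 : π n θ ≠ 0 := by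
    intro h; rw [h] at hπhalf; simp at hπhalf
  -- tail mass bound
  have htail : (∑' θ' : Θ, if θ' = θ then 0 else π n θ') ≤ δ := by
    have heq := ENNReal.tsum_eq_add_tsum_ite (f := π n) θ
    have hle : π n θ + (∑' θ' : Θ, if θ' = θ then 0 else π n θ') ≤ 1 := by
      rw [← heq]; exact hsum1 n
    have h3 : (∑' θ' : Θ, if θ' = θ then 0 else π n θ') ≤ 1 - π n θ :=
      ENNReal.le_sub_of_add_le_left hπtop hle
    refine h3.trans ?_
    calc 1 - π n θ ≤ 1 - (1 - δ) := tsub_le_tsub_left h2.le 1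
    _ = δ := ENNReal.sub_sub_cancel ENNReal.one_ne_top hδ1
  -- risk comparisons
  have hRle := hbayes n ω θ
  have hterm : π n θ * L n θ a ≤ ∑' θ' : Θ, π n θ' * L n θ' a := ENNReal.le_tsum θ
  have hRθ : (∑' θ' : Θ, π n θ' * L n θ' θ) ≤
      (∑' θ' : Θ, if θ' = θ then 0 else π n θ') * K := by
    rw [← ENNReal.tsum_mul_right]
    refine ENNReal.tsum_le_tsum fun θ' => ?_
    by_cases h : θ' = θ
    · subst h; simp [hL0]
    · rw [if_neg h]
      exact mul_le_mul_right (le_iSup (fun θ'' => L n θ'' θ) θ') _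
  have hchain : π n θ * L n θ a ≤ (∑' θ' : Θ, if θ' = θ then 0 else π n θ') * K :=
    hterm.trans (hRle.trans hRθ)
  rcases eq_or_ne K 0 with hK0 | hK0
  · -- K = 0 : posterior risk of θ is 0, so L n θ a = 0, contradicting c < L/K
    have hLa0 : L n θ a = 0 := by
      have h0 : π n θ * L n θ a = 0 :=
        le_antisymm (by simpa [hK0] using hchain) zero_le
      rcases mul_eq_zero.mp h0 with h | h
      · exact absurd h hπ0
      · exact h
    rw [hLa0, hK0] at hcd
    simp at hcd
  rcases eq_or_ne K ⊤ with hKt | hKt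
  · rw [hKt, ENNReal.div_top] at hcd
    exact (not_lt_of_ge (zero_le : 0 ≤ c)) hcd
  -- main case
  have hcK : c * K < L n θ a :=
    (ENNReal.lt_div_iff_mul_lt (Or.inl hK0) (Or.inl hKt)).mp hcd
  have hfinal : π n θ * L n θ a ≤ π n θ * (c * K) := by
    calc π n θ * L n θ a ≤ (∑' θ' : Θ, if θ' = θ then 0 else π n θ') * K := hchain
    _ ≤ δ * K := mul_le_mul_left htail K
    _ ≤ (2⁻¹ * c) * K := mul_le_mul_left hδc K
    _ ≤ (π n θ * c) * K := mul_le_mul_left (mul_le_mul_left hπhalf c) K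
    _ = π n θ * (c * K) := mul_assoc _ _ _
  have hlt : π n θ * (c * K) < π n θ * L n θ a :=
    (ENNReal.mul_lt_mul_iff_right hπ0 hπtop).mpr hcK
  exact absurd hfinal hlt.not_ge
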